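/- Let P be an orthogonal polygon and S a maximal square of side length d whose top and bottom sides overlap with horizontal polygon edges e₁ and e₂, with e₁ containing the top-right corner of S and e₂ containing the bottom-right corner of S. Suppose the axis-parallel d × d square S′ obtained by reflecting S about its right side lies entirely inside P. If 𝓡 is a partial solution containing S and no rec-pack of 𝓡 overlaps S′, then 𝓡 ∪ {S′} is also a partial solution. -/

import Mathlib

open Set

/-- A block: the unit lattice square with the given bottom-left lattice corner. -/
abbrev Blk := ℤ × ℤ

/-- An axis-parallel lattice square: bottom-left corner block and side length. -/
abbrev SqZ := Blk × ℕ

/-- The set of blocks covered by the square `s`. -/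
def SqZ.blk (s : SqZ) : Set Blk :=
  {p | s.1.1 ≤ p.1 ∧ p.1 < s.1.1 + (s.2 : ℤ) ∧ s.1.2 ≤ p.2 ∧ p.2 < s.1.2 + (s.2 : ℤ)}

/-- A rec-pack: corner block, width `t`, strength `η`, and orientation. -/
abbrev RPk := Blk × ℕ × ℕ × Bool

def RPk.t (R : RPk) : ℕ := R.2.1
def RPk.str (R : RPk) : ℕ := R.2.2.1

/-- The extraction of a rec-pack: its `η` side-by-side `t × t` squares. -/
def RPk.ext (R : RPk) : Finset SqZ :=
  (Finset.range (RPk.str R)).image fun i : ℕ =>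
    (if R.2.2.2 then (R.1.1 + (i : ℤ) * (RPk.t R : ℤ), R.1.2)
     else (R.1.1, R.1.2 + (i : ℤ) * (RPk.t R : ℤ)), RPk.t R)

/-- The extraction of a set of rec-packs. -/
def extSet (𝓡 : Finset RPk) : Finset SqZ := 𝓡.biUnion RPk.ext

/-- The set of blocks covered by a finite set of squares. -/
def coveredBy (F : Finset SqZ) : Set Blk := ⋃ s ∈ F, SqZ.blk s

/-- A valid square: nondegenerate and contained in `P`. -/
def ValidSq (P : Set Blk) (s : SqZ) : Prop := 0 < s.2 ∧ SqZ.blk s ⊆ P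

def IsCovering (P : Set Blk) (F : Finset SqZ) : Prop :=
  (∀ s ∈ F, ValidSq P s) ∧ coveredBy F = P

def IsMinCovering (P : Set Blk) (F : Finset SqZ) : Prop :=
  IsCovering P F ∧ ∀ F' : Finset SqZ, IsCovering P F' → F.card ≤ F'.card

/-- A set of rec-packs is a minimum covering of `P` if its extraction is a minimum
square covering of `P` and the extractions are pairwise disjoint. -/
def IsMinRPCovering (P : Set Blk) (𝓡 : Finset RPk) : Prop :=
  IsMinCovering P (extSet 𝓡) ∧
    ∀ R1 ∈ 𝓡, ∀ R2 ∈ 𝓡, R1 ≠ R2 → RPk.ext R1 ∩ RPk.ext R2 = ∅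

/-- A partial solution: a set of rec-packs extendable to a minimum covering of `P`. -/
def PartialSol (P : Set Blk) (𝓡 : Finset RPk) : Prop :=
  ∃ 𝓡' : Finset RPk, 𝓡 ⊆ 𝓡' ∧ IsMinRPCovering P 𝓡'

/-- The blocks covered by the rec-packs of `𝓡`. -/
def rpCovered (𝓡 : Finset RPk) : Set Blk := coveredBy (extSet 𝓡)

/-- Adjacency in `G^𝓡(P)`: two distinct uncovered blocks coverable by one valid square. -/
def AdjR (P : Set Blk) (𝓡 : Finset RPk) (p q : Blk) : Prop :=
  p ≠ q ∧ p ∈ P \ rpCovered 𝓡 ∧ q ∈ P \ rpCovered 𝓡 ∧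
    ∃ s : SqZ, ValidSq P s ∧ p ∈ SqZ.blk s ∧ q ∈ SqZ.blk s

/-- A simplicial node of `G^𝓡(P)`: its closed neighbourhood induces a clique. -/
def SimplicialBlk (P : Set Blk) (𝓡 : Finset RPk) (p : Blk) : Prop :=
  p ∈ P \ rpCovered 𝓡 ∧
    ∀ q r : Blk, AdjR P 𝓡 p q → AdjR P 𝓡 p r → q ≠ r → AdjR P 𝓡 q r

/-- A maximal square: a valid square not contained in any strictly larger valid square. -/
def MaximalSqZ (P : Set Blk) (s : SqZ) : Prop :=
  ValidSq P s ∧ ¬ ∃ s' : SqZ, s.2 < s'.2 ∧ ValidSq P s' ∧ SqZ.blk s ⊆ SqZ.blk s'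

/-- `S` is an unambiguous square given a partial solution `𝓡`: a maximal square
covering some simplicial node `p` of `G^𝓡(P)` together with all of its neighbours. -/
def Unambiguous (P : Set Blk) (𝓡 : Finset RPk) (S : SqZ) : Prop :=
  MaximalSqZ P S ∧ ∃ p : Blk, SimplicialBlk P 𝓡 p ∧ p ∈ SqZ.blk S ∧
    ∀ q : Blk, AdjR P 𝓡 p q → q ∈ SqZ.blk S

/-- A square viewed as a trivial rec-pack (strength 1). -/
def toRP (s : SqZ) : RPk := (s.1, s.2, 1, true)

/-- Rook adjacency of blocks. -/
def adj4 (p q : Blk) : Prop := (p.1 - q.1).natAbs + (p.2 - q.2).natAbs = 1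

/-- A set of blocks is connected (under rook adjacency). -/
def ConnSet (A : Set Blk) : Prop :=
  ∀ p ∈ A, ∀ q ∈ A, Relation.ReflTransGen (fun a b => adj4 a b ∧ a ∈ A ∧ b ∈ A) p q

/-- Let `S` be the maximal square with bottom-left corner block `c` and side `d` in an
orthogonal polygon `P` without holes, whose top and bottom sides overlap with
horizontal polygon edges `e₁` and `e₂` (the rows of blocks just above and just below
`S` are outside `P` over the interval `[a, b)`), with `e₁` containing the top-right
corner of `S` and `e₂` the bottom-right corner (`a < c.1 + d`), and with the strip
between `e₁` and `e₂` extending more than `d` to the right of `S`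
(`c.1 + 2d < b` and `hstrip`).  Let `S′` be the reflection of `S` about its right
side, lying inside `P`.  If `𝓡` is a partial solution containing `S` and no
rec-pack of `𝓡` overlaps `S′`, then `𝓡 ∪ {S′}` is also a partial solution. -/
lemma ext_toRP (s : SqZ) : RPk.ext (toRP s) = {s} := by
  simp [RPk.ext, toRP, RPk.t, RPk.str]

lemma mem_extSet {𝓡 : Finset RPk} {s : SqZ} :
    s ∈ extSet 𝓡 ↔ ∃ R ∈ 𝓡, s ∈ RPk.ext R := Finset.mem_biUnion

theorem reflected_square_extends_partial_solution (P : Set Blk)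
    (hfin : P.Finite) (hne : P.Nonempty) (hconn : ConnSet P) (hnohole : ConnSet Pᶜ)
    (c : Blk) (d : ℕ) (hd : 0 < d)
    (hmax : MaximalSqZ P (c, d))
    (a b : ℤ) (ha : a < c.1 + (d : ℤ)) (hb : c.1 + 2 * (d : ℤ) < b)
    (htop : ∀ x : ℤ, a ≤ x → x < b → (x, c.2 + (d : ℤ)) ∉ P)
    (hbot : ∀ x : ℤ, a ≤ x → x < b → (x, c.2 - 1) ∉ P)
    (hstrip : ∀ x y : ℤ, c.1 + (d : ℤ) ≤ x → x < b → c.2 ≤ y → y < c.2 + (d : ℤ) →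
      (x, y) ∈ P)
    (𝓡 : Finset RPk) (hPS : PartialSol P 𝓡) (hSin : toRP (c, d) ∈ 𝓡)
    (hS' : SqZ.blk ((c.1 + (d : ℤ), c.2), d) ⊆ P)
    (hdisj : ∀ R ∈ 𝓡, ∀ s ∈ RPk.ext R,
      SqZ.blk s ∩ SqZ.blk ((c.1 + (d : ℤ), c.2), d) = ∅) :
    PartialSol P (insert (toRP ((c.1 + (d : ℤ), c.2), d)) 𝓡) := by
  classical
  obtain ⟨𝓡', hsub, ⟨⟨hFcov, hFmin⟩, hdext⟩⟩ := hPS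
  set S' : SqZ := ((c.1 + (d : ℤ), c.2), d) with hS'def
  set F : Finset SqZ := extSet 𝓡' with hFdef
  -- the bottom-left block of S'
  set p : Blk := (c.1 + (d : ℤ), c.2) with hpdef
  have hpstar : p ∈ SqZ.blk S' := by
    simp only [hS'def, hpdef, SqZ.blk, Set.mem_setOf_eq]
    omega
  have hpP : p ∈ P := hS' hpstar
  have hpF : p ∈ coveredBy F := by rw [hFcov.2]; exact hpP
  obtain ⟨s', hs'F, hps'⟩ : ∃ s ∈ F, p ∈ SqZ.blk s := by
    simpa [coveredBy, Set.mem_iUnion] using hpF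
  have hval' := hFcov.1 s' hs'F
  have hsubP : SqZ.blk s' ⊆ P := hval'.2
  have hxs : s'.1.1 ≤ c.1 + (d : ℤ) ∧ c.1 + (d : ℤ) < s'.1.1 + (s'.2 : ℤ) ∧
      s'.1.2 ≤ c.2 ∧ c.2 < s'.1.2 + (s'.2 : ℤ) := hps'
  -- the square s' sits within the strip rows, so its blocks are in S ∪ S'
  have hy0 : c.2 ≤ s'.1.2 := by
    by_contra h
    have hm : ((c.1 + (d : ℤ), c.2 - 1) : Blk) ∈ SqZ.blk s' := by
      simp only [SqZ.blk, Set.mem_setOf_eq]; omega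
    exact hbot (c.1 + d) (by omega) (by omega) (hsubP hm)
  have ht : (s'.2 : ℤ) ≤ d := by
    by_contra h
    have hm : ((c.1 + (d : ℤ), c.2 + (d : ℤ)) : Blk) ∈ SqZ.blk s' := by
      simp only [SqZ.blk, Set.mem_setOf_eq]; omega
    exact htop (c.1 + d) (by omega) (by omega) (hsubP hm)
  have hkey : SqZ.blk s' ⊆ SqZ.blk ((c, d) : SqZ) ∪ SqZ.blk S' := by
    intro q hq
    simp only [SqZ.blk, Set.mem_setOf_eq] at hq
    simp only [SqZ.blk, Set.mem_union, Set.mem_setOf_eq, hS'def, hpdef]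
    omega
  -- s' is not a square extracted from 𝓡, and neither is S'
  have hs'notE : s' ∉ extSet 𝓡 := by
    intro h
    obtain ⟨R, hR, hsR⟩ := mem_extSet.mp h
    have h2 := hdisj R hR s' hsR
    have h3 : p ∈ (∅ : Set Blk) := h2 ▸ (⟨hps', hpstar⟩ : p ∈ SqZ.blk s' ∩ SqZ.blk S')
    exact h3
  have hS'notE : S' ∉ extSet 𝓡 := by
    intro h
    obtain ⟨R, hR, hsR⟩ := mem_extSet.mp h
    have h2 := hdisj R hR S' hsR
    have h3 : p ∈ (∅ : Set Blk) := h2 ▸ (⟨hpstar, hpstar⟩ : p ∈ SqZ.blk S' ∩ SqZ.blk S')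
    exact h3
  have hEF : extSet 𝓡 ⊆ F := by
    intro q hq
    obtain ⟨R, hR, hqR⟩ := mem_extSet.mp hq
    exact mem_extSet.mpr ⟨R, hsub hR, hqR⟩
  have hSsqE : ((c, d) : SqZ) ∈ extSet 𝓡 :=
    mem_extSet.mpr ⟨toRP (c, d), hSin, by simp [ext_toRP]⟩
  have hSsqne : ((c, d) : SqZ) ≠ s' := by
    intro h
    rw [← h] at hps'
    simp only [SqZ.blk, Set.mem_setOf_eq, hpdef] at hps'
    omega
  have hSsqFnew : ((c, d) : SqZ) ∈ F.erase s' :=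
    Finset.mem_erase.mpr ⟨hSsqne, hEF hSsqE⟩
  -- the new covering
  set Fn : Finset SqZ := insert S' (F.erase s') with hFndef
  have hFncov : IsCovering P Fn := by
    constructor
    · intro s hs
      rcases Finset.mem_insert.mp hs with h | h
      · exact h ▸ ⟨hd, hS'⟩
      · exact hFcov.1 s (Finset.mem_of_mem_erase h)
    · apply Set.Subset.antisymm
      · intro q hq
        simp only [coveredBy, Set.mem_iUnion] at hq
        obtain ⟨s, hs, hqs⟩ := hq
        rcases Finset.mem_insert.mp hs with h | h
        · exact hS' (h ▸ hqs)
        · exact (hFcov.1 s (Finset.mem_of_mem_erase h)).2 hqs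
      · intro q hq
        have : q ∈ coveredBy F := by rw [hFcov.2]; exact hq
        simp only [coveredBy, Set.mem_iUnion] at this ⊢
        obtain ⟨s, hs, hqs⟩ := this
        by_cases hss : s = s'
        · rcases hkey (hss ▸ hqs) with h | h
          · exact ⟨(c, d), Finset.mem_insert_of_mem hSsqFnew, h⟩
          · exact ⟨S', Finset.mem_insert_self _ _, h⟩
        · exact ⟨s, Finset.mem_insert_of_mem (Finset.mem_erase.mpr ⟨hss, hs⟩), hqs⟩
  have hFncard : Fn.card ≤ F.card := by
    have h1 : Fn.card ≤ (F.erase s').card + 1 := by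
      rw [hFndef]; exact Finset.card_insert_le _ _
    have h2 := Finset.card_erase_of_mem hs'F
    have h3 : 0 < F.card := Finset.card_pos.mpr ⟨s', hs'F⟩
    omega
  -- the new rec-pack family
  set G : Finset SqZ := (F.erase s') \ extSet 𝓡 with hGdef
  set 𝓡n : Finset RPk := insert (toRP S') (𝓡 ∪ G.image toRP) with h𝓡ndef
  have hmem𝓡n : ∀ R : RPk, R ∈ 𝓡n ↔ R = toRP S' ∨ R ∈ 𝓡 ∨ ∃ g ∈ G, R = toRP g := by
    intro R
    simp only [h𝓡ndef, Finset.mem_insert, Finset.mem_union, Finset.mem_image]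
    constructor
    · rintro (h | h | ⟨g, hg, rfl⟩)
      · exact Or.inl h
      · exact Or.inr (Or.inl h)
      · exact Or.inr (Or.inr ⟨g, hg, rfl⟩)
    · rintro (h | h | ⟨g, hg, rfl⟩)
      · exact Or.inl h
      · exact Or.inr (Or.inl h)
      · exact Or.inr (Or.inr ⟨g, hg, rfl⟩)
  have hextn : extSet 𝓡n = Fn := by
    apply Finset.ext
    intro q
    constructor
    · intro hq
      obtain ⟨R, hR, hqR⟩ := mem_extSet.mp hq
      rcases (hmem𝓡n R).mp hR with h | h | ⟨g, hg, rfl⟩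
      · rw [h, ext_toRP, Finset.mem_singleton] at hqR
        exact hqR ▸ Finset.mem_insert_self _ _
      · have hqE : q ∈ extSet 𝓡 := mem_extSet.mpr ⟨R, h, hqR⟩
        have hqne : q ≠ s' := fun hh => hs'notE (hh ▸ hqE)
        exact Finset.mem_insert_of_mem (Finset.mem_erase.mpr ⟨hqne, hEF hqE⟩)
      · rw [ext_toRP, Finset.mem_singleton] at hqR
        subst hqR
        exact Finset.mem_insert_of_mem ((Finset.mem_sdiff.mp hg).1)
    · intro hq
      rcases Finset.mem_insert.mp hq with h | h
      · exact mem_extSet.mpr ⟨toRP S', (hmem𝓡n _).mpr (Or.inl rfl),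
          by rw [ext_toRP, h, Finset.mem_singleton]⟩
      · by_cases hqE : q ∈ extSet 𝓡
        · obtain ⟨R, hR, hqR⟩ := mem_extSet.mp hqE
          exact mem_extSet.mpr ⟨R, (hmem𝓡n _).mpr (Or.inr (Or.inl hR)), hqR⟩
        · refine mem_extSet.mpr ⟨toRP q, (hmem𝓡n _).mpr (Or.inr (Or.inr
            ⟨q, Finset.mem_sdiff.mpr ⟨h, hqE⟩, rfl⟩)), ?_⟩
          rw [ext_toRP]; exact Finset.mem_singleton_self _
  have htoRPinj : ∀ s t : SqZ, toRP s = toRP t → s = t := by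
    intro s t h
    simp only [toRP, Prod.mk.injEq] at h
    exact Prod.ext h.1 h.2.1
  have hextsubE : ∀ R ∈ 𝓡, RPk.ext R ⊆ extSet 𝓡 := by
    intro R hR q hq
    exact mem_extSet.mpr ⟨R, hR, hq⟩
  refine ⟨𝓡n, ?_, ?_, ?_⟩
  · intro R hR
    rcases Finset.mem_insert.mp hR with h | h
    · exact (hmem𝓡n R).mpr (Or.inl h)
    · exact (hmem𝓡n R).mpr (Or.inr (Or.inl h))
  · rw [hextn]
    exact ⟨hFncov, fun F'' h => le_trans hFncard (hFmin F'' h)⟩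
  · intro R1 hR1 R2 hR2 hne12
    rw [Finset.eq_empty_iff_forall_notMem]
    intro q hq
    rw [Finset.mem_inter] at hq
    obtain ⟨hq1, hq2⟩ := hq
    rcases (hmem𝓡n R1).mp hR1 with h1 | h1 | ⟨g1, hg1, rfl⟩ <;>
      rcases (hmem𝓡n R2).mp hR2 with h2 | h2 | ⟨g2, hg2, rfl⟩
    · exact hne12 (h1.trans h2.symm)
    · rw [h1, ext_toRP, Finset.mem_singleton] at hq1
      exact hS'notE (hq1 ▸ hextsubE R2 h2 hq2)
    · rw [h1, ext_toRP, Finset.mem_singleton] at hq1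
      rw [ext_toRP, Finset.mem_singleton] at hq2
      exact hne12 (by rw [h1, hq2.symm.trans hq1])
    · rw [h2, ext_toRP, Finset.mem_singleton] at hq2
      exact hS'notE (hq2 ▸ hextsubE R1 h1 hq1)
    · have h3 := hdext R1 (hsub h1) R2 (hsub h2) hne12
      have : q ∈ RPk.ext R1 ∩ RPk.ext R2 := Finset.mem_inter.mpr ⟨hq1, hq2⟩
      rw [h3] at this
      exact absurd this (Finset.notMem_empty q)
    · rw [ext_toRP, Finset.mem_singleton] at hq2
      exact (Finset.mem_sdiff.mp hg2).2 (hq2 ▸ hextsubE R1 h1 hq1)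
    · rw [ext_toRP, Finset.mem_singleton] at hq1
      rw [h2, ext_toRP, Finset.mem_singleton] at hq2
      exact hne12 (by rw [h2, hq1.symm.trans hq2])
    · rw [ext_toRP, Finset.mem_singleton] at hq1
      exact (Finset.mem_sdiff.mp hg1).2 (hq1 ▸ hextsubE R2 h2 hq2)
    · rw [ext_toRP, Finset.mem_singleton] at hq1
      rw [ext_toRP, Finset.mem_singleton] at hq2
      exact hne12 (by rw [show g1 = g2 from hq1.symm.trans hq2])
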